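/- Let M_A = { u_t : t ∈ [0,1] } ⊂ L^2([0,1]) where u_t = indicator of the interval [0, t]. Then there is a constant C > 0 independent of N such that the Kolmogorov N-width satisfies d(N; M_A) ≥ C N^{-1/2} for all N ∈ ℕ. -/

import Mathlib

open MeasureTheory

/-- The measure: Lebesgue measure restricted to `[0,1]`. -/
noncomputable def muI : Measure ℝ := volume.restrict (Set.Icc (0 : ℝ) 1)

/-- `u_t`: the indicator of `[0, t]` as an element of `L²([0,1])`. -/
noncomputable def uAdv (t : ℝ) : Lp ℝ 2 muI :=
  indicatorConstLp 2 (measurableSet_Icc (a := (0 : ℝ)) (b := t))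
    (by
      refine ne_of_lt (lt_of_le_of_lt (Measure.restrict_apply_le _ _) ?_)
      exact measure_Icc_lt_top) (1 : ℝ)

/-- Kolmogorov N-width (in `ℝ≥0∞`). -/
noncomputable def kolmogorovWidth {V : Type*} [NormedAddCommGroup V]
    (N : ℕ) (M : Set V) [Module ℝ V] : ENNReal :=
  ⨅ (W : Submodule ℝ V) (_ : Module.finrank ℝ W = N),
    ⨆ u ∈ M, EMetric.infEdist u (W : Set V)

section Aux

open Module

/-- Abstract lower bound: a `2N`-element orthonormal family cannot be uniformly close
to an `N`-dimensional subspace. -/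
lemma key_lemma {E : Type*} [NormedAddCommGroup E] [InnerProductSpace ℝ E] {N : ℕ}
    (W : Submodule ℝ E) [FiniteDimensional ℝ W] (hW : finrank ℝ W = N)
    (e : Fin (2 * N) → E) (he : Orthonormal ℝ e) (hN : 0 < N) :
    ∃ k, ∀ v ∈ W, Real.sqrt (1 / 2) ≤ ‖e k - v‖ := by
  haveI : CompleteSpace W := FiniteDimensional.complete ℝ W
  set b := stdOrthonormalBasis ℝ W with hb
  have hbo : Orthonormal ℝ (fun i => (b i : E)) := b.orthonormal.comp_linearIsometry W.subtypeₗᵢ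
  have hproj : ∀ x : E, ‖(W.orthogonalProjectionOnto x : E)‖ ^ 2
      = ∑ i, (inner ℝ ((b i : E)) x : ℝ) ^ 2 := by
    intro x
    have h0 : (W.orthogonalProjectionOnto x : E) = ∑ i, (inner ℝ (b i : E) x : ℝ) • (b i : E) := by
      have := b.orthogonalProjectionOnto_apply_eq_sum (x := x)
      calc (W.orthogonalProjectionOnto x : E) = ((∑ i, (inner ℝ (b i : E) x : ℝ) • b i : W) : E) := by
            rw [← this]
          _ = ∑ i, (inner ℝ (b i : E) x : ℝ) • (b i : E) := by push_cast; rfl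
    rw [h0, ← real_inner_self_eq_norm_sq, hbo.inner_sum]
    simp [pow_two]
  have hbessel : ∑ k, ‖(W.orthogonalProjectionOnto (e k) : E)‖ ^ 2 ≤ (N : ℝ) := by
    calc ∑ k, ‖(W.orthogonalProjectionOnto (e k) : E)‖ ^ 2
        = ∑ k, ∑ i, (inner ℝ ((b i : E)) (e k) : ℝ) ^ 2 := by simp only [hproj]
      _ = ∑ i, ∑ k, (inner ℝ (e k) ((b i : E)) : ℝ) ^ 2 := by
          rw [Finset.sum_comm]
          congr 1; ext i; congr 1; ext k; rw [real_inner_comm]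
      _ ≤ ∑ i : Fin (finrank ℝ W), (‖(b i : E)‖ ^ 2) := by
          refine Finset.sum_le_sum fun i _ => ?_
          simpa [Real.norm_eq_abs, sq_abs] using he.sum_inner_products_le ((b i : E))
      _ ≤ (N : ℝ) := by
          simp only [hbo.1, one_pow]
          simp [hW]
  have hdist : ∑ k, ‖e k - (W.orthogonalProjectionOnto (e k) : E)‖ ^ 2 ≥ (N : ℝ) := by
    have h1 : ∀ k, ‖e k - (W.orthogonalProjectionOnto (e k) : E)‖ ^ 2
        = 1 - ‖(W.orthogonalProjectionOnto (e k) : E)‖ ^ 2 := by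
      intro k
      have hp := Submodule.norm_sq_eq_add_norm_sq_projection (e k) W
      have h2 : ((Wᗮ.orthogonalProjectionOnto (e k)) : E) = e k - W.orthogonalProjectionOnto (e k) := by
        exact Submodule.starProjection_orthogonal_val (e k)
      rw [show ‖(Wᗮ.orthogonalProjectionOnto (e k) : W ᗮ)‖ = ‖((Wᗮ.orthogonalProjectionOnto (e k)) : E)‖
        from rfl, h2] at hp
      have h3 : ‖e k‖ = 1 := he.1 k
      rw [h3] at hp
      have h4 : ‖(W.orthogonalProjectionOnto (e k) : W)‖ = ‖((W.orthogonalProjectionOnto (e k)) : E)‖ :=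
        rfl
      rw [h4] at hp
      linarith
    simp only [h1, Finset.sum_sub_distrib, Finset.sum_const, Finset.card_univ, Fintype.card_fin,
      nsmul_eq_mul]
    push_cast
    linarith
  by_contra hcon
  push_neg at hcon
  have hlt : ∀ k : Fin (2 * N), ‖e k - (W.orthogonalProjectionOnto (e k) : E)‖ ^ 2 < 1 / 2 := by
    intro k
    obtain ⟨v, hvW, hv⟩ := hcon k
    have hmin : ‖e k - (W.orthogonalProjectionOnto (e k) : E)‖ ≤ ‖e k - v‖ := by
      rw [← Submodule.starProjection_apply, Submodule.starProjection_minimal]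
      exact ciInf_le ⟨0, by rintro _ ⟨x, rfl⟩; exact norm_nonneg _⟩ (⟨v, hvW⟩ : W)
    have hlt' : ‖e k - (W.orthogonalProjectionOnto (e k) : E)‖ < Real.sqrt (1 / 2) :=
      lt_of_le_of_lt hmin hv
    exact (Real.lt_sqrt (norm_nonneg _)).mp hlt'
  have hsum : ∑ k, ‖e k - (W.orthogonalProjectionOnto (e k) : E)‖ ^ 2 < (N : ℝ) := by
    have hne : (Finset.univ : Finset (Fin (2 * N))).Nonempty := by
      refine Finset.univ_nonempty_iff.mpr ?_
      exact Fin.pos_iff_nonempty.mp (by omega)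
    calc ∑ k, ‖e k - (W.orthogonalProjectionOnto (e k) : E)‖ ^ 2
        < ∑ _k : Fin (2 * N), (1 / 2 : ℝ) := Finset.sum_lt_sum_of_nonempty hne fun k _ => hlt k
      _ = (N : ℝ) := by simp [Finset.sum_const]; push_cast; ring
  linarith

lemma uAdv_coeFn (t : ℝ) : uAdv t =ᵐ[muI] (Set.Icc (0:ℝ) t).indicator fun _ => (1:ℝ) :=
  indicatorConstLp_coeFn

lemma inner_uAdv {s t : ℝ} (hs0 : 0 ≤ s) (ht0 : 0 ≤ t) (hm : min s t ≤ 1) :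
    (inner ℝ (uAdv s) (uAdv t) : ℝ) = min s t := by
  rw [uAdv, L2.inner_indicatorConstLp_one]
  have h1 : ∫ x in Set.Icc (0:ℝ) s, (uAdv t) x ∂muI
      = ∫ x in Set.Icc (0:ℝ) s, (Set.Icc (0:ℝ) t).indicator (fun _ => (1:ℝ)) x ∂muI := by
    refine setIntegral_congr_ae measurableSet_Icc ?_
    filter_upwards [uAdv_coeFn t] with x hx _
    exact hx
  rw [h1, setIntegral_indicator measurableSet_Icc]
  have h2 : Set.Icc (0:ℝ) s ∩ Set.Icc (0:ℝ) t = Set.Icc (0:ℝ) (min s t) := by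
    rw [Set.Icc_inter_Icc]; simp
  rw [h2]
  simp only [integral_const, smul_eq_mul, mul_one]
  rw [muI, Measure.restrict_restrict measurableSet_Icc]
  have h3 : Set.Icc (0:ℝ) (min s t) ∩ Set.Icc (0:ℝ) 1 = Set.Icc (0:ℝ) (min s t) := by
    rw [Set.Icc_inter_Icc]; simp [hm]
  rw [Measure.real, Measure.restrict_apply_univ, h3, Real.volume_Icc,
    ENNReal.toReal_ofReal (by simp [le_min_iff, hs0, ht0])]
  simp

lemma inner_uAdv_sub {a b c d : ℝ} (ha : 0 ≤ a) (hab : a ≤ b) (hb : b ≤ 1)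
    (hc : 0 ≤ c) (hcd : c ≤ d) (hd : d ≤ 1) :
    (inner ℝ (uAdv b - uAdv a) (uAdv d - uAdv c) : ℝ)
      = min b d - min b c - (min a d - min a c) := by
  rw [inner_sub_left, inner_sub_right, inner_sub_right,
    inner_uAdv (le_trans ha hab) (le_trans hc hcd) (by simp [hb]),
    inner_uAdv (le_trans ha hab) hc (by simp [hb]),
    inner_uAdv ha (le_trans hc hcd) (by simp [le_trans hab hb]),
    inner_uAdv ha hc (by simp [le_trans hab hb])]

set_option linter.unreachableTactic false in
lemma orthonormal_e {N : ℕ} (hN : 0 < N) :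
    Orthonormal ℝ (fun k : Fin (2 * N) =>
      (Real.sqrt (2 * N)) • (uAdv (((k : ℕ) + 1 : ℝ) / (2 * N)) - uAdv ((k : ℕ) / (2 * N)))) := by
  have h2N : (0 : ℝ) < 2 * N := by positivity
  rw [orthonormal_iff_ite]
  intro j k
  have hj1 : ((j : ℕ) : ℝ) + 1 ≤ 2 * N := by exact_mod_cast j.isLt
  have hk1 : ((k : ℕ) : ℝ) + 1 ≤ 2 * N := by exact_mod_cast k.isLt
  rw [real_inner_smul_left, real_inner_smul_right, inner_uAdv_sub (by positivity)
    (by gcongr <;> linarith) (by rw [div_le_one h2N]; exact hj1) (by positivity)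
    (by gcongr <;> linarith) (by rw [div_le_one h2N]; exact hk1)]
  rcases lt_trichotomy (j : ℕ) (k : ℕ) with h | h | h
  · have hjk : ((j : ℕ) : ℝ) + 1 ≤ (k : ℕ) := by exact_mod_cast h
    rw [if_neg (by exact fun hh => absurd (hh ▸ h) (lt_irrefl _))]
    rw [min_eq_left (by gcongr <;> linarith), min_eq_left (by gcongr <;> linarith),
      min_eq_left (by gcongr <;> linarith), min_eq_left (by gcongr <;> linarith)]
    ring
  · have : j = k := Fin.ext h
    subst this
    rw [if_pos rfl]
    rw [min_self, min_eq_right (by gcongr <;> linarith),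
      min_eq_left (by gcongr <;> linarith), min_self]
    rw [← mul_assoc, Real.mul_self_sqrt (by positivity)]
    field_simp
    ring
  · have hjk : ((k : ℕ) : ℝ) + 1 ≤ (j : ℕ) := by exact_mod_cast h
    rw [if_neg (by exact fun hh => absurd (hh ▸ h) (lt_irrefl _))]
    rw [min_eq_right (by gcongr <;> linarith), min_eq_right (by gcongr <;> linarith),
      min_eq_right (by gcongr <;> linarith), min_eq_right (by gcongr <;> linarith)]
    ring

end Aux

/-- The solution manifold `M_A = {1_{[0,t]} : t ∈ [0,1]}` of
constant-speed advection satisfies `d(N; M_A) ≥ C N^{-1/2}`. -/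
theorem stmt6 :
    ∃ C : ℝ, 0 < C ∧ ∀ N : ℕ,
      ENNReal.ofReal (C * (N : ℝ) ^ (-(1 / 2 : ℝ))) ≤
        kolmogorovWidth N {u : Lp ℝ 2 muI | ∃ t ∈ Set.Icc (0 : ℝ) 1, u = uAdv t} := by
  refine ⟨1 / 4, by norm_num, fun N => ?_⟩
  rcases Nat.eq_zero_or_pos N with h0 | hN
  · subst h0
    simp [Real.zero_rpow (by norm_num : (-(1 / 2 : ℝ)) ≠ 0)]
  have h2N : (0 : ℝ) < 2 * N := by positivity
  have hNR : (0 : ℝ) < N := by exact_mod_cast hN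
  have hsqN : (0 : ℝ) < Real.sqrt N := Real.sqrt_pos.mpr hNR
  -- the value s = (1/4) N^{-1/2} = 1/(4 √N)
  set s : ℝ := 1 / 4 * (N : ℝ) ^ (-(1 / 2 : ℝ)) with hs_def
  have hrpow : (N : ℝ) ^ (-(1 / 2 : ℝ)) = (Real.sqrt N)⁻¹ := by
    rw [Real.rpow_neg (Nat.cast_nonneg N), Real.sqrt_eq_rpow]
  have hs_eq : s = 1 / (4 * Real.sqrt N) := by
    rw [hs_def, hrpow]; field_simp
  have hs_pos : 0 < s := by rw [hs_eq]; positivity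
  rw [kolmogorovWidth]
  refine le_iInf fun W => le_iInf fun hW => ?_
  haveI : FiniteDimensional ℝ W :=
    Module.finite_of_finrank_pos (by rw [hW]; exact hN)
  obtain ⟨k, hk⟩ := key_lemma W hW _ (orthonormal_e hN) hN
  set a : ℝ := (k : ℕ) / (2 * N) with ha_def
  set b : ℝ := ((k : ℕ) + 1 : ℝ) / (2 * N) with hb_def
  have ha0 : 0 ≤ a := by positivity
  have hk1 : ((k : ℕ) : ℝ) + 1 ≤ 2 * N := by exact_mod_cast k.isLt
  have hab : a ≤ b := by rw [ha_def, hb_def]; gcongr <;> linarith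
  have hb1 : b ≤ 1 := by rw [hb_def, div_le_one h2N]; exact hk1
  have ha1 : a ≤ 1 := le_trans hab hb1
  have haM : uAdv a ∈ {u : Lp ℝ 2 muI | ∃ t ∈ Set.Icc (0 : ℝ) 1, u = uAdv t} :=
    ⟨a, ⟨ha0, ha1⟩, rfl⟩
  have hbM : uAdv b ∈ {u : Lp ℝ 2 muI | ∃ t ∈ Set.Icc (0 : ℝ) 1, u = uAdv t} :=
    ⟨b, ⟨le_trans ha0 hab, hb1⟩, rfl⟩
  -- lower bound for the difference against every element of W
  have hphi : ∀ w ∈ W, 2 * s ≤ ‖(uAdv b - uAdv a) - w‖ := by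
    intro w hw
    have h1 := hk (Real.sqrt (2 * N) • w) (W.smul_mem _ hw)
    have h2 : Real.sqrt (2 * N) • (uAdv b - uAdv a) - Real.sqrt (2 * N) • w
        = Real.sqrt (2 * N) • ((uAdv b - uAdv a) - w) := by module
    rw [h2, norm_smul, Real.norm_eq_abs, abs_of_nonneg (Real.sqrt_nonneg _)] at h1
    have hsq2N : (0 : ℝ) < Real.sqrt (2 * N) := Real.sqrt_pos.mpr h2N
    have h3 : Real.sqrt (1 / 2) / Real.sqrt (2 * N) ≤ ‖(uAdv b - uAdv a) - w‖ :=
      (div_le_iff₀' hsq2N).mpr h1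
    refine le_trans (le_of_eq ?_) h3
    rw [hs_eq]
    rw [show (1 : ℝ) / 2 = 2⁻¹ by norm_num, Real.sqrt_inv,
      Real.sqrt_mul (by norm_num : (0:ℝ) ≤ 2)]
    have h4 : Real.sqrt 2 * Real.sqrt 2 = 2 := Real.mul_self_sqrt (by norm_num)
    have hsq2 : (0 : ℝ) < Real.sqrt 2 := Real.sqrt_pos.mpr (by norm_num)
    field_simp
    nlinarith [hsqN, hsq2]
  -- choose the good point in the manifold
  by_cases hca : ∃ v ∈ W, ‖uAdv b - v‖ < s
  · obtain ⟨v₀, hv₀W, hv₀⟩ := hca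
    refine le_trans ?_ (le_iSup₂_of_le (uAdv a) haM le_rfl)
    refine Metric.le_infEDist.mpr ?_
    intro y hy
    rw [edist_dist, dist_eq_norm]
    refine ENNReal.ofReal_le_ofReal ?_
    have hmem : v₀ - y ∈ W := W.sub_mem hv₀W hy
    have h5 := hphi (v₀ - y) hmem
    have h6 : (uAdv b - uAdv a) - (v₀ - y) = (uAdv b - v₀) - (uAdv a - y) := by abel
    rw [h6] at h5
    have h7 : ‖(uAdv b - v₀) - (uAdv a - y)‖ ≤ ‖uAdv b - v₀‖ + ‖uAdv a - y‖ :=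
      norm_sub_le _ _
    linarith
  · push_neg at hca
    refine le_trans ?_ (le_iSup₂_of_le (uAdv b) hbM le_rfl)
    refine Metric.le_infEDist.mpr ?_
    intro y hy
    rw [edist_dist, dist_eq_norm]
    exact ENNReal.ofReal_le_ofReal (hca y hy)
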